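/- Convergence of SmartFL under poisoning attacks (Property 1 / appendix Property 3). Let E be a real inner product space and let L, Ls : E → ℝ be differentiable. Assume: (i) ∇L is Lc-Lipschitz for some Lc > 0; (ii) w* ∈ E is a global minimizer of L and L satisfies the PL inequality with constant μ > 0 at w*; (iii) ‖∇L(w)‖² ≤ V1 and ‖∇Ls(w)‖² ≤ V1 for all w ∈ E, where V1 > 0; (iv) ‖∇Ls(w) − ∇L(w)‖² ≤ V3 for all w ∈ E, where V3 ≥ 0; (v) |L(w) − Ls(w)| ≤ δ/2 for all w ∈ E, where δ ≥ 0. Let w : ℕ → E (global models) and Δ : ℕ → E (honest-client updates), and let γ > 0, ε ≥ 0, 0 < η ≤ 1, V2 > 0 be such that for every round t: (a) ⟨∇Ls(w t), Δ t⟩ + γ‖∇Ls(w t)‖² ≤ ε; (b) ‖Δ t‖ ≤ η‖∇Ls(w t)‖; (c) ‖∇Ls(w t)‖² ≥ V2; (d) Ls(w (t+1)) ≤ Ls(w t + Δ t). Set ρ = 1 − 2μγV2/V1 and assume 0 < ρ < 1. Then for every T ≥ 0: L(w T) − L(w*) ≤ ρ^T · (L(w 0) − L(w*)) + (V1/(2μγV2))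 · (η·(V3/2 + (Lc + 1)·V1/2) + ε + δ). In particular the optimization error converges linearly to a quantity of order η·(V3 + V1) + ε + δ. -/

import Mathlib

open scoped RealInnerProductSpace

private theorem descent_lemma
    {E : Type*} [NormedAddCommGroup E] [InnerProductSpace ℝ E] [CompleteSpace E]
    (L : E → ℝ) (hL : Differentiable ℝ L) (Lc : ℝ) (hLc : 0 ≤ Lc)
    (hLip : ∀ u v : E, ‖gradient L u - gradient L v‖ ≤ Lc * ‖u - v‖) (x d : E) :
    L (x + d) ≤ L x + ⟪gradient L x, d⟫ + Lc / 2 * ‖d‖ ^ 2 := by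
  set φ : ℝ → ℝ := fun s => L (x + s • d) - s * ⟪gradient L x, d⟫ - Lc * s ^ 2 / 2 * ‖d‖ ^ 2
    with hφ
  have key : ∀ s : ℝ, HasDerivAt φ
      (⟪gradient L (x + s • d), d⟫ - ⟪gradient L x, d⟫ - Lc * s * ‖d‖ ^ 2) s := by
    intro s
    have h1 : HasDerivAt (fun s : ℝ => x + s • d) d s := by
      simpa using ((hasDerivAt_id s).smul_const d).const_add x
    have h2 : HasFDerivAt L (InnerProductSpace.toDual ℝ E (gradient L (x + s • d)))
        (x + s • d) := (hL (x + s • d)).hasGradientAt.hasFDerivAt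
    have h3 : HasDerivAt (fun s : ℝ => L (x + s • d)) ⟪gradient L (x + s • d), d⟫ s := by
      have h3' := h2.comp_hasDerivAt s h1
      rw [InnerProductSpace.toDual_apply_apply] at h3'
      exact h3'
    have h4 : HasDerivAt (fun s : ℝ => s * ⟪gradient L x, d⟫) ⟪gradient L x, d⟫ s := by
      simpa using (hasDerivAt_id s).mul_const (⟪gradient L x, d⟫)
    have h5 : HasDerivAt (fun s : ℝ => Lc * s ^ 2 / 2 * ‖d‖ ^ 2) (Lc * s * ‖d‖ ^ 2) s := by
      have : HasDerivAt (fun s : ℝ => s ^ 2) (2 * s) s := by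
        simpa using hasDerivAt_pow 2 s
      have := (((this.const_mul Lc).div_const 2).mul_const (‖d‖ ^ 2))
      rw [show Lc * s * ‖d‖ ^ 2 = Lc * (2 * s) / 2 * ‖d‖ ^ 2 by ring]
      exact this
    exact (h3.sub h4).sub h5
  have hanti : AntitoneOn φ (Set.Icc (0 : ℝ) 1) := by
    apply antitoneOn_of_deriv_nonpos (convex_Icc 0 1)
    · exact fun s _ => (key s).continuousAt.continuousWithinAt
    · intro s hs
      exact (key s).differentiableAt.differentiableWithinAt
    · intro s hs
      rw [interior_Icc] at hs
      rw [(key s).deriv]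
      have hcs : ⟪gradient L (x + s • d) - gradient L x, d⟫ ≤
          ‖gradient L (x + s • d) - gradient L x‖ * ‖d‖ := real_inner_le_norm _ _
      have hlip := hLip (x + s • d) x
      have hnorm : ‖x + s • d - x‖ = s * ‖d‖ := by
        rw [add_sub_cancel_left, norm_smul, Real.norm_eq_abs, abs_of_pos hs.1]
      rw [hnorm] at hlip
      have h6 : ⟪gradient L (x + s • d) - gradient L x, d⟫ ≤ Lc * s * ‖d‖ ^ 2 := by
        calc ⟪gradient L (x + s • d) - gradient L x, d⟫
            ≤ ‖gradient L (x + s • d) - gradient L x‖ * ‖d‖ := hcs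
          _ ≤ Lc * (s * ‖d‖) * ‖d‖ := by
              apply mul_le_mul_of_nonneg_right hlip (norm_nonneg d)
          _ = Lc * s * ‖d‖ ^ 2 := by ring
      rw [inner_sub_left] at h6
      linarith
  have h01 : φ 1 ≤ φ 0 := hanti (by norm_num) (by norm_num) (by norm_num)
  simp only [hφ, one_smul, zero_smul, add_zero, zero_mul, sub_zero, one_mul, one_pow,
    mul_one] at h01
  linarith

/-- Convergence of SmartFL under poisoning attacks (Property 1). -/
theorem smartfl_convergence
    {E : Type*} [NormedAddCommGroup E] [InnerProductSpace ℝ E] [CompleteSpace E]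
    (L Ls : E → ℝ) (hL : Differentiable ℝ L) (hLs : Differentiable ℝ Ls)
    (Lc : ℝ) (hLc : 0 < Lc)
    (hLip : ∀ u v : E, ‖gradient L u - gradient L v‖ ≤ Lc * ‖u - v‖)
    (wstar : E) (hmin : ∀ v : E, L wstar ≤ L v)
    (μ : ℝ) (hμ : 0 < μ)
    (hPL : ∀ v : E, L v - L wstar ≤ ‖gradient L v‖ ^ 2 / (2 * μ))
    (V1 : ℝ) (hV1 : 0 < V1)
    (hgL : ∀ v : E, ‖gradient L v‖ ^ 2 ≤ V1)
    (hgLs : ∀ v : E, ‖gradient Ls v‖ ^ 2 ≤ V1)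
    (V3 : ℝ) (hV3 : 0 ≤ V3)
    (hgdiff : ∀ v : E, ‖gradient Ls v - gradient L v‖ ^ 2 ≤ V3)
    (δ : ℝ) (hδ : 0 ≤ δ)
    (hgap : ∀ v : E, |L v - Ls v| ≤ δ / 2)
    (w : ℕ → E) (Δ : ℕ → E)
    (γ : ℝ) (hγ : 0 < γ) (ε : ℝ) (hε : 0 ≤ ε)
    (η : ℝ) (hη0 : 0 < η) (hη1 : η ≤ 1)
    (V2 : ℝ) (hV2 : 0 < V2)
    (ha : ∀ t : ℕ, ⟪gradient Ls (w t), Δ t⟫ + γ * ‖gradient Ls (w t)‖ ^ 2 ≤ ε)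
    (hb : ∀ t : ℕ, ‖Δ t‖ ≤ η * ‖gradient Ls (w t)‖)
    (hc : ∀ t : ℕ, V2 ≤ ‖gradient Ls (w t)‖ ^ 2)
    (hd : ∀ t : ℕ, Ls (w (t + 1)) ≤ Ls (w t + Δ t))
    (ρ : ℝ) (hρ : ρ = 1 - 2 * μ * γ * V2 / V1)
    (hρ0 : 0 < ρ) (hρ1 : ρ < 1) :
    ∀ T : ℕ, L (w T) - L wstar ≤
      ρ ^ T * (L (w 0) - L wstar) +
        (V1 / (2 * μ * γ * V2)) * (η * (V3 / 2 + (Lc + 1) * V1 / 2) + ε + δ) := by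
  set C : ℝ := η * (V3 / 2 + (Lc + 1) * V1 / 2) + ε + δ with hC
  set K : ℝ := V1 / (2 * μ * γ * V2) with hK
  have hKpos : 0 < K := by
    apply div_pos hV1
    positivity
  have hCnn : 0 ≤ C := by
    have h := mul_nonneg hη0.le (show (0:ℝ) ≤ V3 / 2 + (Lc + 1) * V1 / 2 by nlinarith)
    rw [hC]; linarith
  have h1ρ : 1 - ρ = 1 / K := by
    rw [hρ, hK]
    field_simp
    ring
  -- one-step inequality
  have step : ∀ t : ℕ, L (w (t + 1)) - L wstar ≤ ρ * (L (w t) - L wstar) + C := by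
    intro t
    set g : E := gradient L (w t)
    set gs : E := gradient Ls (w t)
    have hgs2 : V2 ≤ ‖gs‖ ^ 2 := hc t
    -- descent lemma
    have hdesc := descent_lemma L hL Lc hLc.le hLip (w t) (Δ t)
    -- inner product bound
    have hinner : ⟪g, Δ t⟫ ≤ ε - γ * ‖gs‖ ^ 2 + η * (V3 / 2 + V1 / 2) := by
      have h1 : ⟪g, Δ t⟫ = ⟪gs, Δ t⟫ + ⟪g - gs, Δ t⟫ := by
        rw [inner_sub_left]; ring
      have h2 : ⟪g - gs, Δ t⟫ ≤ ‖g - gs‖ * ‖Δ t‖ := real_inner_le_norm _ _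
      have h3 : ‖g - gs‖ * ‖Δ t‖ ≤ ‖g - gs‖ * (η * ‖gs‖) :=
        mul_le_mul_of_nonneg_left (hb t) (norm_nonneg _)
      have h4 : ‖g - gs‖ * ‖gs‖ ≤ (‖g - gs‖ ^ 2 + ‖gs‖ ^ 2) / 2 := by
        nlinarith [sq_nonneg (‖g - gs‖ - ‖gs‖)]
      have h5 : ‖g - gs‖ ^ 2 ≤ V3 := by
        have := hgdiff (w t)
        rwa [← norm_neg, neg_sub] at this
      have h6 : ‖gs‖ ^ 2 ≤ V1 := hgLs (w t)
      have h7 : ⟪g - gs, Δ t⟫ ≤ η * (V3 / 2 + V1 / 2) := by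
        calc ⟪g - gs, Δ t⟫ ≤ ‖g - gs‖ * (η * ‖gs‖) := le_trans h2 h3
          _ = η * (‖g - gs‖ * ‖gs‖) := by ring
          _ ≤ η * ((‖g - gs‖ ^ 2 + ‖gs‖ ^ 2) / 2) := by
              exact mul_le_mul_of_nonneg_left h4 hη0.le
          _ ≤ η * (V3 / 2 + V1 / 2) := by
              apply mul_le_mul_of_nonneg_left _ hη0.le
              linarith
      have h8 := ha t
      linarith
    -- norm bound
    have hnormΔ : Lc / 2 * ‖Δ t‖ ^ 2 ≤ η * (Lc * V1 / 2) := by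
      have h1 : ‖Δ t‖ ^ 2 ≤ (η * ‖gs‖) ^ 2 := pow_le_pow_left₀ (norm_nonneg _) (hb t) 2
      have h2 : (η * ‖gs‖) ^ 2 = η ^ 2 * ‖gs‖ ^ 2 := by ring
      have h3 : η ^ 2 ≤ η := by
        calc η ^ 2 = η * η := sq η
          _ ≤ 1 * η := mul_le_mul_of_nonneg_right hη1 hη0.le
          _ = η := one_mul η
      have h4 : ‖gs‖ ^ 2 ≤ V1 := hgLs (w t)
      have h5 : ‖Δ t‖ ^ 2 ≤ η * V1 := by
        calc ‖Δ t‖ ^ 2 ≤ η ^ 2 * ‖gs‖ ^ 2 := h1.trans_eq h2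
          _ ≤ η * V1 := mul_le_mul h3 h4 (sq_nonneg _) hη0.le
      calc Lc / 2 * ‖Δ t‖ ^ 2 ≤ Lc / 2 * (η * V1) :=
            mul_le_mul_of_nonneg_left h5 (by positivity)
        _ = η * (Lc * V1 / 2) := by ring
    -- from descent to loss decrease
    have hLdec : L (w t + Δ t) ≤ L (w t) - γ * ‖gs‖ ^ 2 + ε + η * (V3 / 2 + (Lc + 1) * V1 / 2) := by
      have hid : η * (V3 / 2 + V1 / 2) + η * (Lc * V1 / 2) = η * (V3 / 2 + (Lc + 1) * V1 / 2) := by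
        ring
      linarith only [hdesc, hinner, hnormΔ, hid]
    -- pass through Ls
    have hnext : L (w (t + 1)) ≤ L (w t + Δ t) + δ := by
      have g1 := hgap (w (t + 1))
      have g2 := hgap (w t + Δ t)
      have g3 := hd t
      rw [abs_le] at g1 g2
      linarith only [g1.1, g1.2, g2.1, g2.2, g3]
    have hstep1 : L (w (t + 1)) ≤ L (w t) - γ * ‖gs‖ ^ 2 + C := by
      rw [hC]; linarith only [hnext, hLdec]
    -- PL-based contraction
    have hcontr : (1 - ρ) * (L (w t) - L wstar) ≤ γ * ‖gs‖ ^ 2 := by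
      have hpl := hPL (w t)
      have hbnd : L (w t) - L wstar ≤ V1 / (2 * μ) := by
        have := hgL (w t)
        calc L (w t) - L wstar ≤ ‖g‖ ^ 2 / (2 * μ) := hpl
          _ ≤ V1 / (2 * μ) := by gcongr
      have hnn : 0 ≤ L (w t) - L wstar := by linarith [hmin (w t)]
      have h1ρ' : 1 - ρ = 2 * μ * γ * V2 / V1 := by rw [hρ]; ring
      rw [h1ρ']
      calc 2 * μ * γ * V2 / V1 * (L (w t) - L wstar)
          ≤ 2 * μ * γ * V2 / V1 * (V1 / (2 * μ)) := by
            apply mul_le_mul_of_nonneg_left hbnd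
            positivity
        _ = γ * V2 := by field_simp
        _ ≤ γ * ‖gs‖ ^ 2 := by
            exact mul_le_mul_of_nonneg_left hgs2 hγ.le
    have hexp : (1 - ρ) * (L (w t) - L wstar) =
        (L (w t) - L wstar) - ρ * (L (w t) - L wstar) := by ring
    linarith only [hstep1, hcontr, hexp]
  -- induction
  intro T
  induction T with
  | zero =>
    simp only [pow_zero, one_mul]
    have : 0 ≤ K * C := mul_nonneg hKpos.le hCnn
    linarith
  | succ T ih =>
    have h1 := step T
    have h2 : ρ * (L (w T) - L wstar) ≤ ρ * (ρ ^ T * (L (w 0) - L wstar) + K * C) :=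
      mul_le_mul_of_nonneg_left ih hρ0.le
    have hKC : ρ * (K * C) + C = K * C := by
      have h3 : (1 - ρ) * K = 1 := by
        rw [h1ρ]
        field_simp
      linear_combination (-C) * h3
    calc L (w (T + 1)) - L wstar ≤ ρ * (L (w T) - L wstar) + C := h1
      _ ≤ ρ * (ρ ^ T * (L (w 0) - L wstar) + K * C) + C := by linarith
      _ = ρ ^ (T + 1) * (L (w 0) - L wstar) + (ρ * (K * C) + C) := by ring
      _ = ρ ^ (T + 1) * (L (w 0) - L wstar) + K * C := by rw [hKC]
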